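/- Let f be the inverse of h(u) = (1/2)u√(1+u²) + (1/2)ln(u + √(1+u²)). Then for every v ≥ 0 one has f(v) ≥ √(1+2v) − 1. -/
import Mathlib

/-- The change of variables `h(u) = (1/2)·u·√(1+u²) + (1/2)·ln(u + √(1+u²))`. -/
noncomputable def h (u : ℝ) : ℝ :=
  (1 / 2) * u * Real.sqrt (1 + u ^ 2) + (1 / 2) * Real.log (u + Real.sqrt (1 + u ^ 2))

lemma h_eq (u : ℝ) : h u = (1/4) * Real.sinh (2 * Real.arsinh u) + (1/2) * Real.arsinh u := by
  have h1 : Real.sinh (2 * Real.arsinh u) = 2 * u * Real.sqrt (1 + u ^ 2) := by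
    rw [Real.sinh_two_mul, Real.sinh_arsinh, Real.cosh_arsinh]
  rw [h, h1, Real.arsinh]
  ring

lemma h_strictMono : StrictMono h := by
  intro a b hab
  have h1 := Real.arsinh_strictMono hab
  simp only [h_eq]
  have h2 : Real.sinh (2 * Real.arsinh a) < Real.sinh (2 * Real.arsinh b) :=
    Real.sinh_strictMono (by linarith)
  linarith

lemma arsinh_le_self {u : ℝ} (hu : 0 ≤ u) : Real.arsinh u ≤ u := by
  rw [← Real.sinh_le_sinh, Real.sinh_arsinh]
  exact Real.self_le_sinh_iff.mpr hu

lemma h_le {u : ℝ} (hu : 0 ≤ u) : h u ≤ u ^ 2 / 2 + u := by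
  have hs : Real.sqrt (1 + u ^ 2) ≤ u + 1 := by
    rw [show u + 1 = Real.sqrt ((u + 1) ^ 2) from (Real.sqrt_sq (by linarith)).symm]
    exact Real.sqrt_le_sqrt (by nlinarith)
  have ha : Real.log (u + Real.sqrt (1 + u ^ 2)) ≤ u := by
    have := arsinh_le_self hu
    rwa [Real.arsinh] at this
  rw [h]
  nlinarith [Real.sqrt_nonneg (1 + u ^ 2)]

/-- If `f` is the inverse of `h`, then `f(v) ≥ √(1+2v) − 1` for every `v ≥ 0`. -/
theorem f_inverse_lower_bound (f : ℝ → ℝ)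
    (hf₁ : Function.LeftInverse f h) (hf₂ : Function.RightInverse f h) :
    ∀ v : ℝ, 0 ≤ v → Real.sqrt (1 + 2 * v) - 1 ≤ f v := by
  intro v hv
  set u := Real.sqrt (1 + 2 * v) - 1 with hu
  have h1 : (1:ℝ) ≤ Real.sqrt (1 + 2 * v) := by
    rw [show Real.sqrt (1 + 2 * v) = Real.sqrt (1 + 2 * v) from rfl]
    calc (1:ℝ) = Real.sqrt 1 := Real.sqrt_one.symm
    _ ≤ _ := Real.sqrt_le_sqrt (by linarith)
  have hu0 : 0 ≤ u := by simp [hu]; linarith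
  have hsq : Real.sqrt (1 + 2 * v) ^ 2 = 1 + 2 * v := Real.sq_sqrt (by linarith)
  have key : h u ≤ v := by
    have := h_le hu0
    have : h u ≤ u ^ 2 / 2 + u := this
    have heq : u ^ 2 / 2 + u = v := by
      rw [hu]; nlinarith
    linarith
  have : h u ≤ h (f v) := by rwa [hf₂ v]
  exact h_strictMono.le_iff_le.mp this
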